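/- The function h₁(x) = e^{x²}(e^{x²} - 1 - x²)/(e^{x²} - 1)² is strictly increasing on (0, ∞), with limit 1/2 as x → 0⁺ and limit 1 as x → ∞; in particular 1/2 < h₁(x) < 1 for all x > 0. -/

import Mathlib

open Filter Topology

open Real

-- key inequality: t e^t + t - 2 e^t + 2 > 0 for t > 0
private lemma aux_key {t : ℝ} (ht : 0 < t) : 0 < t * Real.exp t + t - 2 * Real.exp t + 2 := by
  set g : ℝ → ℝ := fun s => s * Real.exp s + s - 2 * Real.exp s + 2 with hg
  have hderiv : ∀ s : ℝ, HasDerivAt g ((s - 1) * Real.exp s + 1) s := by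
    intro s
    have h1 : HasDerivAt (fun s : ℝ => s * Real.exp s) (1 * Real.exp s + s * Real.exp s) s :=
      (hasDerivAt_id s).mul (Real.hasDerivAt_exp s)
    have h2 := ((h1.add (hasDerivAt_id s)).sub ((Real.hasDerivAt_exp s).const_mul 2)).add_const 2
    refine h2.congr_deriv ?_
    ring
  have hmono : StrictMonoOn g (Set.Ici 0) := by
    apply strictMonoOn_of_deriv_pos (convex_Ici 0)
    · exact fun s _ => ((hderiv s).continuousAt).continuousWithinAt
    · intro s hs
      rw [interior_Ici] at hs
      rw [(hderiv s).deriv]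
      have hs' : 0 < s := hs
      have h3 : (-s) + 1 < Real.exp (-s) := Real.add_one_lt_exp (by intro h; linarith [neg_eq_zero.mp h])
      have h4 : Real.exp (-s) * Real.exp s = 1 := by
        rw [← Real.exp_add]; simp
      have h5 : (0:ℝ) < Real.exp s := Real.exp_pos s
      nlinarith
  have h0 : g 0 = 0 := by simp [hg]
  have := hmono (Set.self_mem_Ici) (Set.mem_Ici.mpr ht.le) ht
  rw [h0] at this
  simpa [hg] using this

private lemma aux_hasDeriv {x : ℝ} (hx : 0 < x) :
    HasDerivAt (fun y : ℝ => Real.exp (y ^ 2) * (Real.exp (y ^ 2) - 1 - y ^ 2) /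
      (Real.exp (y ^ 2) - 1) ^ 2)
      (2 * x * Real.exp (x ^ 2) * (Real.exp (x ^ 2) - 1) *
        (x ^ 2 * Real.exp (x ^ 2) + x ^ 2 - 2 * Real.exp (x ^ 2) + 2) /
        (((Real.exp (x ^ 2) - 1) ^ 2) ^ 2)) x := by
  have hx2 : HasDerivAt (fun y : ℝ => y ^ 2) (2 * x) x := by
    simpa using hasDerivAt_pow 2 x
  have hu : HasDerivAt (fun y : ℝ => Real.exp (y ^ 2)) (Real.exp (x ^ 2) * (2 * x)) x := hx2.exp
  have hN : HasDerivAt (fun y : ℝ => Real.exp (y ^ 2) * (Real.exp (y ^ 2) - 1 - y ^ 2))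
      (Real.exp (x ^ 2) * (2 * x) * (Real.exp (x ^ 2) - 1 - x ^ 2) +
        Real.exp (x ^ 2) * (Real.exp (x ^ 2) * (2 * x) - 2 * x)) x :=
    hu.mul ((hu.sub_const 1).sub hx2)
  have hD : HasDerivAt (fun y : ℝ => (Real.exp (y ^ 2) - 1) ^ 2)
      ((2 : ℕ) * (Real.exp (x ^ 2) - 1) ^ 1 * (Real.exp (x ^ 2) * (2 * x))) x :=
    (hu.sub_const 1).pow 2
  have h1 : 1 < Real.exp (x ^ 2) := Real.one_lt_exp_iff.mpr (by positivity)
  have hne : (Real.exp (x ^ 2) - 1) ^ 2 ≠ 0 := pow_ne_zero 2 (by linarith)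
  have := hN.div hD hne
  refine this.congr_deriv ?_
  ring

private lemma aux_A : Tendsto (fun t : ℝ => (Real.exp t - 1 - t) / t ^ 2) (𝓝[>] 0) (𝓝 (1 / 2)) := by
  rw [← tendsto_sub_nhds_zero_iff]
  apply squeeze_zero_norm' (a := fun t : ℝ => 2 / 9 * t)
  · filter_upwards [Ioo_mem_nhdsGT_of_mem (by norm_num : (0:ℝ) ∈ Set.Ico 0 1)] with t ht
    obtain ⟨ht0, ht1⟩ := ht
    have hb := Real.exp_bound (x := t) (by rw [abs_of_pos ht0]; linarith) (n := 3) (by norm_num)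
    have hsum : ∑ i ∈ Finset.range 3, t ^ i / (Nat.factorial i) = 1 + t + t ^ 2 / 2 := by
      simp [Finset.sum_range_succ, Nat.factorial]
    rw [hsum, abs_of_pos ht0] at hb
    have ht2 : (0:ℝ) < t ^ 2 := by positivity
    have heq : (Real.exp t - 1 - t) / t ^ 2 - 1 / 2 = (Real.exp t - (1 + t + t ^ 2 / 2)) / t ^ 2 := by
      field_simp
      ring
    rw [Real.norm_eq_abs, heq, abs_div, abs_of_pos ht2, div_le_iff₀ ht2]
    calc |Real.exp t - (1 + t + t ^ 2 / 2)| ≤ t ^ 3 * (4 / (6 * 3)) := by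
            convert hb using 2 <;> norm_num [Nat.factorial]
      _ ≤ 2 / 9 * t * t ^ 2 := by nlinarith
  · have : Tendsto (fun t : ℝ => 2 / 9 * t) (𝓝 0) (𝓝 (2 / 9 * 0)) :=
      (tendsto_id.const_mul _)
    simpa using this.mono_left nhdsWithin_le_nhds

private lemma aux_B : Tendsto (fun t : ℝ => (Real.exp t - 1) / t) (𝓝[>] 0) (𝓝 1) := by
  rw [show (1:ℝ) = Real.exp 0 from (Real.exp_zero).symm]
  have h := Real.hasDerivAt_exp 0
  have := hasDerivAt_iff_tendsto_slope.mp h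
  have h2 : Tendsto (slope Real.exp 0) (𝓝[>] 0) (𝓝 (Real.exp 0)) :=
    this.mono_left (nhdsWithin_mono 0 (by intro x hx; exact ne_of_gt hx))
  refine h2.congr fun t => ?_
  simp [slope_def_field, div_eq_div_iff]

private lemma aux_lim0 : Tendsto (fun t : ℝ => Real.exp t * (Real.exp t - 1 - t) / (Real.exp t - 1) ^ 2)
    (𝓝[>] 0) (𝓝 (1 / 2)) := by
  have hexp : Tendsto Real.exp (𝓝[>] (0:ℝ)) (𝓝 1) := by
    have := Real.continuous_exp.tendsto 0
    rw [Real.exp_zero] at this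
    exact this.mono_left nhdsWithin_le_nhds
  have hB2 : Tendsto (fun t : ℝ => ((Real.exp t - 1) / t) ^ 2) (𝓝[>] 0) (𝓝 1) := by
    simpa using aux_B.pow 2
  have hmain : Tendsto (fun t : ℝ =>
      Real.exp t * ((Real.exp t - 1 - t) / t ^ 2) / ((Real.exp t - 1) / t) ^ 2)
      (𝓝[>] 0) (𝓝 (1 * (1 / 2) / 1)) :=
    (hexp.mul aux_A).div hB2 one_ne_zero
  rw [show (1 : ℝ) * (1 / 2) / 1 = 1 / 2 by norm_num] at hmain
  refine hmain.congr' ?_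
  filter_upwards [self_mem_nhdsWithin] with t ht
  have ht0 : (0:ℝ) < t := ht
  have h1 : 1 < Real.exp t := Real.one_lt_exp_iff.mpr ht0
  have hne : Real.exp t - 1 ≠ 0 := by linarith
  field_simp

private lemma aux_limtop : Tendsto (fun x : ℝ => Real.exp (x ^ 2) * (Real.exp (x ^ 2) - 1 - x ^ 2) /
    (Real.exp (x ^ 2) - 1) ^ 2) atTop (𝓝 1) := by
  have hsq : Tendsto (fun x : ℝ => x ^ 2) atTop atTop := tendsto_pow_atTop two_ne_zero
  have e1 : Tendsto (fun x : ℝ => Real.exp (-(x ^ 2))) atTop (𝓝 0) :=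
    Real.tendsto_exp_neg_atTop_nhds_zero.comp hsq
  have e2 : Tendsto (fun x : ℝ => x ^ 2 * Real.exp (-(x ^ 2))) atTop (𝓝 0) := by
    have := (Real.tendsto_pow_mul_exp_neg_atTop_nhds_zero 1).comp hsq
    simpa [Function.comp_def] using this
  have hnum : Tendsto (fun x : ℝ => 1 - Real.exp (-(x ^ 2)) - x ^ 2 * Real.exp (-(x ^ 2)))
      atTop (𝓝 1) := by
    have := (tendsto_const_nhds (x := (1:ℝ)) (f := atTop)).sub e1 |>.sub e2
    simpa using this
  have hden : Tendsto (fun x : ℝ => (1 - Real.exp (-(x ^ 2))) ^ 2) atTop (𝓝 1) := by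
    have := ((tendsto_const_nhds (x := (1:ℝ)) (f := atTop)).sub e1).pow 2
    simpa using this
  have hmain := hnum.div hden one_ne_zero
  rw [show (1:ℝ)/1 = 1 by norm_num] at hmain
  refine hmain.congr' ?_
  filter_upwards [eventually_ge_atTop (1:ℝ)] with x hx
  have hx2 : (0:ℝ) < x ^ 2 := by positivity
  have h1 : 1 < Real.exp (x ^ 2) := Real.one_lt_exp_iff.mpr hx2
  have hne : Real.exp (x ^ 2) - 1 ≠ 0 := by linarith
  have hpos : (0:ℝ) < Real.exp (x ^ 2) := Real.exp_pos _
  simp only [Pi.div_apply]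
  rw [Real.exp_neg]
  field_simp

/-- `h₁(x) = e^{x²}(e^{x²} - 1 - x²)/(e^{x²} - 1)²` is strictly increasing on `(0,∞)`,
tends to `1/2` at `0⁺` and to `1` at `∞`; in particular `1/2 < h₁(x) < 1` for `x > 0`. -/
theorem stmt_11
    (h₁ : ℝ → ℝ)
    (hh : ∀ x : ℝ, h₁ x =
      Real.exp (x ^ 2) * (Real.exp (x ^ 2) - 1 - x ^ 2) / (Real.exp (x ^ 2) - 1) ^ 2) :
    StrictMonoOn h₁ (Set.Ioi 0) ∧
    Tendsto h₁ (𝓝[>] 0) (𝓝 (1 / 2)) ∧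
    Tendsto h₁ atTop (𝓝 1) ∧
    (∀ x : ℝ, 0 < x → 1 / 2 < h₁ x ∧ h₁ x < 1) := by
  have hmono : StrictMonoOn (fun x : ℝ => Real.exp (x ^ 2) * (Real.exp (x ^ 2) - 1 - x ^ 2) /
      (Real.exp (x ^ 2) - 1) ^ 2) (Set.Ioi 0) := by
    apply strictMonoOn_of_deriv_pos (convex_Ioi 0)
    · exact fun x hx => (aux_hasDeriv hx).continuousAt.continuousWithinAt
    · intro x hx
      rw [interior_Ioi] at hx
      have hx' : (0:ℝ) < x := hx
      rw [(aux_hasDeriv hx').deriv]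
      have h1 : 1 < Real.exp (x ^ 2) := Real.one_lt_exp_iff.mpr (by positivity)
      have hkey := aux_key (t := x ^ 2) (by positivity)
      apply div_pos
      · apply mul_pos
        apply mul_pos
        apply mul_pos
        · positivity
        · positivity
        · linarith
        · exact hkey
      · exact pow_pos (pow_pos (by linarith) 2) 2
  refine ⟨?_, ?_, ?_, ?_⟩
  · intro a ha b hb hab
    rw [hh a, hh b]
    exact hmono ha hb hab
  · have hcomp : Tendsto (fun x : ℝ => x ^ 2) (𝓝[>] 0) (𝓝[>] 0) := by
      rw [tendsto_nhdsWithin_iff]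
      constructor
      · have := (continuous_pow 2).tendsto (0:ℝ)
        simpa using this.mono_left nhdsWithin_le_nhds
      · filter_upwards [self_mem_nhdsWithin] with x hx
        have : (0:ℝ) < x := hx
        exact Set.mem_Ioi.mpr (by positivity)
    exact (aux_lim0.comp hcomp).congr fun x => (hh x).symm
  · exact aux_limtop.congr fun x => (hh x).symm
  · intro x hx
    have ht : (0:ℝ) < x ^ 2 := by positivity
    have h1 : 1 < Real.exp (x ^ 2) := Real.one_lt_exp_iff.mpr ht
    have hpos : (0:ℝ) < Real.exp (x ^ 2) := Real.exp_pos _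
    have hden : (0:ℝ) < (Real.exp (x ^ 2) - 1) ^ 2 := pow_pos (by linarith) 2
    have hinv : Real.exp (-(x ^ 2)) * Real.exp (x ^ 2) = 1 := by
      rw [← Real.exp_add]; simp
    rw [hh x]
    constructor
    · rw [lt_div_iff₀ hden]
      have hs : x ^ 2 < Real.sinh (x ^ 2) := Real.self_lt_sinh_iff.mpr ht
      rw [Real.sinh_eq] at hs
      have h2 : 2 * (x ^ 2) * Real.exp (x ^ 2) <
          Real.exp (x ^ 2) * Real.exp (x ^ 2) - 1 := by nlinarith
      nlinarith
    · rw [div_lt_one hden]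
      have h3 : -(x ^ 2) + 1 < Real.exp (-(x ^ 2)) := Real.add_one_lt_exp (by linarith)
      have h4 : (1 - x ^ 2) * Real.exp (x ^ 2) < 1 := by nlinarith
      nlinarith
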